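/- Fix λ ∈ (0,1). There exists a constant C > 0, depending only on λ, with the following property: for every c₀ > 0, every function u : ℝⁿ × [0,∞) → ℝ with u(x,t) ≥ c₀ for all (x,t), every q > 1 and every (x,t) ∈ ℝⁿ × [0,∞), one has 0 ≤ u_{⋆,λ}(x,t) − u_{q,λ}(x,t) ≤ (C/q) · ( u_{⋆,λ}(x,t) + 1 ). -/
import Mathlib


open Filter Topology

/-- The spatially quasiconvex envelope `u_{⋆,λ}` of `u`. -/
noncomputable def qcEnv {n : ℕ} (lam : ℝ) (u : EuclideanSpace ℝ (Fin n) → ℝ → ℝ)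
    (x : EuclideanSpace ℝ (Fin n)) (t : ℝ) : ℝ :=
  sInf {m : ℝ | ∃ y z : EuclideanSpace ℝ (Fin n),
    lam • y + (1 - lam) • z = x ∧ m = max (u y t) (u z t)}

/-- The spatially power convex envelope `u_{q,λ}` of `u`. -/
noncomputable def pcEnv {n : ℕ} (lam q : ℝ) (u : EuclideanSpace ℝ (Fin n) → ℝ → ℝ)
    (x : EuclideanSpace ℝ (Fin n)) (t : ℝ) : ℝ :=
  sInf {m : ℝ | ∃ y z : EuclideanSpace ℝ (Fin n),
    lam • y + (1 - lam) • z = x ∧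
    m = (lam * (u y t) ^ q + (1 - lam) * (u z t) ^ q) ^ (1 / q)}

/-- The quantitative estimate in the proof of Proposition 4.1: for fixed `λ ∈ (0,1)`
there is `C > 0` depending only on `λ` such that for every uniformly positive `u`,
every `q > 1` and every `(x,t)`,
`0 ≤ u_{⋆,λ}(x,t) − u_{q,λ}(x,t) ≤ (C/q)(u_{⋆,λ}(x,t) + 1)`. -/
theorem stmt_4 (lam : ℝ) (hlam : lam ∈ Set.Ioo (0 : ℝ) 1) :
    ∃ C > (0 : ℝ), ∀ (n : ℕ) (c₀ : ℝ), 0 < c₀ →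
      ∀ u : EuclideanSpace ℝ (Fin n) → ℝ → ℝ,
        (∀ x t, 0 ≤ t → c₀ ≤ u x t) →
        ∀ q : ℝ, 1 < q → ∀ (x : EuclideanSpace ℝ (Fin n)) (t : ℝ), 0 ≤ t →
          0 ≤ qcEnv lam u x t - pcEnv lam q u x t ∧
          qcEnv lam u x t - pcEnv lam q u x t ≤ (C / q) * (qcEnv lam u x t + 1) := by
  obtain ⟨hl0, hl1⟩ := hlam
  set μ : ℝ := min lam (1 - lam) with hμdef
  have hμ0 : 0 < μ := lt_min hl0 (by linarith)
  have hμ1 : μ < 1 := lt_of_le_of_lt (min_le_left _ _) hl1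
  refine ⟨-Real.log μ, neg_pos.2 (Real.log_neg hμ0 hμ1), ?_⟩
  intro n c₀ hc₀ u hu q hq x t ht
  have hq0 : (0 : ℝ) < q := by linarith
  have h1q : (0 : ℝ) < 1 / q := by positivity
  set S₁ : Set ℝ := {m : ℝ | ∃ y z : EuclideanSpace ℝ (Fin n),
    lam • y + (1 - lam) • z = x ∧ m = max (u y t) (u z t)} with hS₁
  set S₂ : Set ℝ := {m : ℝ | ∃ y z : EuclideanSpace ℝ (Fin n),
    lam • y + (1 - lam) • z = x ∧
    m = (lam * (u y t) ^ q + (1 - lam) * (u z t) ^ q) ^ (1 / q)} with hS₂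
  have hxx : lam • x + (1 - lam) • x = x := by
    rw [← add_smul]; norm_num
  have hne₁ : S₁.Nonempty := ⟨max (u x t) (u x t), x, x, hxx, rfl⟩
  have hne₂ : S₂.Nonempty :=
    ⟨(lam * (u x t) ^ q + (1 - lam) * (u x t) ^ q) ^ (1 / q), x, x, hxx, rfl⟩
  have hlb₁ : ∀ m ∈ S₁, c₀ ≤ m := by
    rintro m ⟨y, z, -, rfl⟩
    exact le_trans (hu y t ht) (le_max_left _ _)
  have hlb₂ : ∀ m ∈ S₂, c₀ ≤ m := by
    rintro m ⟨y, z, -, rfl⟩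
    have ha : c₀ ^ q ≤ (u y t) ^ q := Real.rpow_le_rpow hc₀.le (hu y t ht) hq0.le
    have hb : c₀ ^ q ≤ (u z t) ^ q := Real.rpow_le_rpow hc₀.le (hu z t ht) hq0.le
    have hsum : c₀ ^ q ≤ lam * (u y t) ^ q + (1 - lam) * (u z t) ^ q := by nlinarith
    have := Real.rpow_le_rpow (by positivity) hsum h1q.le
    have hcq : (c₀ ^ q) ^ (1 / q) = c₀ := by
      rw [← Real.rpow_mul hc₀.le, mul_one_div, div_self hq0.ne', Real.rpow_one]
    linarith [hcq ▸ this]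
  have hbdd₁ : BddBelow S₁ := ⟨c₀, fun m hm => hlb₁ m hm⟩
  have hbdd₂ : BddBelow S₂ := ⟨c₀, fun m hm => hlb₂ m hm⟩
  -- key pointwise inequalities
  have key : ∀ y z : EuclideanSpace ℝ (Fin n),
      (lam * (u y t) ^ q + (1 - lam) * (u z t) ^ q) ^ (1 / q) ≤ max (u y t) (u z t) ∧
      μ ^ (1 / q) * max (u y t) (u z t) ≤
        (lam * (u y t) ^ q + (1 - lam) * (u z t) ^ q) ^ (1 / q) := by
    intro y z
    set a := u y t with ha'
    set b := u z t with hb'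
    have ha0 : 0 < a := lt_of_lt_of_le hc₀ (hu y t ht)
    have hb0 : 0 < b := lt_of_lt_of_le hc₀ (hu z t ht)
    set M := max a b with hM'
    have hM0 : 0 < M := lt_of_lt_of_le ha0 (le_max_left _ _)
    have hMq : (M ^ q) ^ (1 / q) = M := by
      rw [← Real.rpow_mul hM0.le, mul_one_div, div_self hq0.ne', Real.rpow_one]
    constructor
    · have haM : a ^ q ≤ M ^ q := Real.rpow_le_rpow ha0.le (le_max_left _ _) hq0.le
      have hbM : b ^ q ≤ M ^ q := Real.rpow_le_rpow hb0.le (le_max_right _ _) hq0.le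
      have hsum : lam * a ^ q + (1 - lam) * b ^ q ≤ M ^ q := by nlinarith
      have hnn : (0:ℝ) ≤ lam * a ^ q + (1 - lam) * b ^ q := by
        nlinarith [(Real.rpow_pos_of_pos ha0 q).le, (Real.rpow_pos_of_pos hb0 q).le]
      have := Real.rpow_le_rpow hnn hsum h1q.le
      linarith [hMq ▸ this]
    · have hlow : μ * M ^ q ≤ lam * a ^ q + (1 - lam) * b ^ q := by
        have haq : (0:ℝ) ≤ a ^ q := (Real.rpow_pos_of_pos ha0 q).le
        have hbq : (0:ℝ) ≤ b ^ q := (Real.rpow_pos_of_pos hb0 q).le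
        have hμl : μ ≤ lam := min_le_left _ _
        have hμr : μ ≤ 1 - lam := min_le_right _ _
        rcases le_total a b with h | h
        · rw [hM', max_eq_right h]; nlinarith
        · rw [hM', max_eq_left h]; nlinarith
      have hmul : (μ * M ^ q) ^ (1 / q) = μ ^ (1 / q) * M := by
        rw [Real.mul_rpow hμ0.le (Real.rpow_pos_of_pos hM0 q).le, hMq]
      have := Real.rpow_le_rpow (mul_pos hμ0 (Real.rpow_pos_of_pos hM0 q)).le hlow h1q.le
      linarith [hmul ▸ this]
  -- pcEnv ≤ qcEnv
  have hpq : pcEnv lam q u x t ≤ qcEnv lam u x t := by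
    rw [qcEnv, pcEnv]
    refine le_csInf hne₁ ?_
    rintro m ⟨y, z, hyz, rfl⟩
    exact le_trans (csInf_le hbdd₂ ⟨y, z, hyz, rfl⟩) (key y z).1
  -- μ^{1/q} qc ≤ pc
  have hqc_lb : c₀ ≤ qcEnv lam u x t := le_csInf hne₁ hlb₁
  have hqc0 : 0 < qcEnv lam u x t := lt_of_lt_of_le hc₀ hqc_lb
  have hμq0 : (0:ℝ) ≤ μ ^ (1 / q) := (Real.rpow_pos_of_pos hμ0 _).le
  have hlow : μ ^ (1 / q) * qcEnv lam u x t ≤ pcEnv lam q u x t := by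
    rw [pcEnv]
    refine le_csInf hne₂ ?_
    rintro m ⟨y, z, hyz, rfl⟩
    have h1 : qcEnv lam u x t ≤ max (u y t) (u z t) := csInf_le hbdd₁ ⟨y, z, hyz, rfl⟩
    calc μ ^ (1 / q) * qcEnv lam u x t
        ≤ μ ^ (1 / q) * max (u y t) (u z t) := by
          exact mul_le_mul_of_nonneg_left h1 hμq0
      _ ≤ _ := (key y z).2
  refine ⟨by linarith, ?_⟩
  -- 1 - μ^{1/q} ≤ (-log μ)/q
  have hexp : μ ^ (1 / q) = Real.exp (Real.log μ * (1 / q)) := by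
    rw [Real.rpow_def_of_pos hμ0]
  have hone : 1 - μ ^ (1 / q) ≤ -Real.log μ / q := by
    have := Real.add_one_le_exp (Real.log μ * (1 / q))
    rw [hexp]
    have : Real.log μ * (1 / q) + 1 ≤ Real.exp (Real.log μ * (1 / q)) :=
      Real.add_one_le_exp _
    rw [neg_div]
    have h' : Real.log μ * (1 / q) = Real.log μ / q := by ring
    linarith [h' ▸ this]
  have hstep : qcEnv lam u x t - pcEnv lam q u x t ≤
      (1 - μ ^ (1 / q)) * qcEnv lam u x t := by nlinarith
  have hCq0 : (0:ℝ) < -Real.log μ / q := by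
    exact div_pos (neg_pos.2 (Real.log_neg hμ0 hμ1)) hq0
  nlinarith [mul_le_mul_of_nonneg_right hone hqc0.le]
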